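/- arXiv:2209.14391 — 3 statements merged into one kernel-verified Lean document; each statement's English description precedes it below -/
import Mathlib

section
/- Suppose Y = X'τ, X ⊥ τ | V, and Q(v) = E[XX' | V = v] is invertible almost surely. Then E[Q(V)⁻¹ X Y] = E[τ]. That is, the inverse-weighted moment identifies the average of the random coefficients. -/
open MeasureTheory ProbabilityTheory Matrix Set

section Aux

variable {Ω : Type*} {m : MeasurableSpace Ω} [mΩ : MeasurableSpace Ω] [StandardBorelSpace Ω]
  {μ : Measure Ω} [IsProbabilityMeasure μ]

/-- An `m`-measurable real function is a.s. constant under the conditional expectation kernel. -/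
lemma ae_ae_eq_condexpKernel (hm : m ≤ mΩ) {g : Ω → ℝ} (hg : Measurable[m] g) :
    ∀ᵐ ω ∂μ, ∀ᵐ ω' ∂(condExpKernel μ m ω), g ω' = g ω := by
  set h : Ω → ℝ := fun ω => Real.arctan (g ω) with hh_def
  have hhm : Measurable[m] h := Real.measurable_arctan.comp hg
  have hh : Measurable h := hhm.mono hm le_rfl
  have hbound : ∀ ω, ‖h ω‖ ≤ Real.pi / 2 := by
    intro ω
    rw [Real.norm_eq_abs, abs_le]
    exact ⟨(Real.neg_pi_div_two_lt_arctan _).le, (Real.arctan_lt_pi_div_two _).le⟩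
  have hboundmul : ∀ x, ‖h x * h x‖ ≤ (Real.pi / 2) * (Real.pi / 2) := by
    intro x
    rw [Real.norm_eq_abs, abs_mul]
    have h1 := hbound x
    rw [Real.norm_eq_abs] at h1
    exact mul_le_mul h1 h1 (abs_nonneg _) (by positivity)
  have hint : Integrable h μ :=
    (integrable_const (Real.pi / 2)).mono' hh.aestronglyMeasurable
      (Filter.Eventually.of_forall hbound)
  have hint2 : Integrable (fun ω => h ω * h ω) μ :=
    (integrable_const ((Real.pi / 2) * (Real.pi / 2))).mono'
      (hh.mul hh).aestronglyMeasurable (Filter.Eventually.of_forall hboundmul)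
  have F1 : μ[h|m] = h := condExp_of_stronglyMeasurable hm hhm.stronglyMeasurable hint
  have F2 : μ[fun ω => h ω * h ω|m] = fun ω => h ω * h ω :=
    condExp_of_stronglyMeasurable hm (hhm.mul hhm).stronglyMeasurable hint2
  have E1 : (fun ω => ∫ y, h y ∂(condExpKernel μ m ω)) =ᵐ[μ] h := by
    have := condExp_ae_eq_integral_condExpKernel hm hint
    rw [F1] at this
    exact this.symm
  have E2 : (fun ω => ∫ y, h y * h y ∂(condExpKernel μ m ω)) =ᵐ[μ] fun ω => h ω * h ω := by
    have := condExp_ae_eq_integral_condExpKernel hm hint2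
    rw [F2] at this
    exact this.symm
  filter_upwards [E1, E2] with ω hE1 hE2
  haveI : IsProbabilityMeasure (condExpKernel μ m ω) := by infer_instance
  set ν := condExpKernel μ m ω with hν
  have hint_h : Integrable h ν :=
    (integrable_const (Real.pi / 2)).mono' hh.aestronglyMeasurable
      (Filter.Eventually.of_forall hbound)
  have hint_hh : Integrable (fun x => h x * h x) ν :=
    (integrable_const ((Real.pi / 2) * (Real.pi / 2))).mono'
      (hh.mul hh).aestronglyMeasurable (Filter.Eventually.of_forall hboundmul)
  have hrw : (fun x => (h x - h ω) ^ 2)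
      = fun x => (h x * h x - (2 * h ω) * h x + h ω * h ω) := by
    funext x; ring
  have hint_sq : Integrable (fun x => (h x - h ω) ^ 2) ν := by
    rw [hrw]
    exact (hint_hh.sub (hint_h.const_mul _)).add (integrable_const _)
  have hzero : ∫ x, (h x - h ω) ^ 2 ∂ν = 0 := by
    rw [hrw, integral_add (f := fun x => h x * h x - 2 * h ω * h x)
        (g := fun _ => h ω * h ω) (hint_hh.sub (hint_h.const_mul (2 * h ω)))
        (integrable_const (h ω * h ω)),
      integral_sub (f := fun x => h x * h x) (g := fun x => 2 * h ω * h x)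
        hint_hh (hint_h.const_mul (2 * h ω)), integral_const_mul,
      integral_const, probReal_univ, one_smul]
    have e1 : ∫ y, h y ∂ν = h ω := hE1
    have e2 : ∫ y, h y * h y ∂ν = h ω * h ω := hE2
    rw [e1, e2]
    ring
  have hae : (fun x => (h x - h ω) ^ 2) =ᵐ[ν] 0 :=
    (integral_eq_zero_iff_of_nonneg (fun x => sq_nonneg _) hint_sq).mp hzero
  filter_upwards [hae] with x hx
  have hx' : (h x - h ω) ^ 2 = 0 := hx
  have hsub : h x - h ω = 0 := by
    exact pow_eq_zero_iff (n := 2) (by norm_num) |>.mp hx'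
  exact Real.arctan_injective (by linarith)

/-- Conditional independence gives a.e. independence under the conditional expectation kernel,
for real-valued random variables. -/
lemma ae_indepFun_condexpKernel (hm : m ≤ mΩ) {u w : Ω → ℝ}
    (hu : Measurable u) (hw : Measurable w) (h : CondIndepFun m hm u w μ) :
    ∀ᵐ ω ∂μ, IndepFun u w (condExpKernel μ m ω) := by
  rw [condIndepFun_iff _ _ u w hu hw μ] at h
  have hsets : ∀ p : ℚ × ℚ, ∀ᵐ ω ∂μ,
      (condExpKernel μ m ω (u ⁻¹' Iic (p.1 : ℝ) ∩ w ⁻¹' Iic (p.2 : ℝ))).toReal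
      = (condExpKernel μ m ω (u ⁻¹' Iic (p.1 : ℝ))).toReal
        * (condExpKernel μ m ω (w ⁻¹' Iic (p.2 : ℝ))).toReal := by
    rintro ⟨q, r⟩
    have h1 := condExpKernel_ae_eq_condExp (μ := μ) hm
      ((hu (measurableSet_Iic (a := (q : ℝ)))).inter (hw (measurableSet_Iic (a := (r : ℝ)))))
    have h2 := condExpKernel_ae_eq_condExp (μ := μ) hm (hu (measurableSet_Iic (a := (q : ℝ))))
    have h3 := condExpKernel_ae_eq_condExp (μ := μ) hm (hw (measurableSet_Iic (a := (r : ℝ))))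
    have h4 := h (u ⁻¹' Iic (q : ℝ)) (w ⁻¹' Iic (r : ℝ))
      ⟨Iic (q : ℝ), measurableSet_Iic, rfl⟩ ⟨Iic (r : ℝ), measurableSet_Iic, rfl⟩
    filter_upwards [h1, h2, h3, h4] with ω e1 e2 e3 e4
    simp only [← measureReal_def]
    rw [e1, e4, Pi.mul_apply, e2, e3]
  rw [← ae_all_iff] at hsets
  filter_upwards [hsets] with ω hω
  haveI : IsProbabilityMeasure (condExpKernel μ m ω) := by infer_instance
  set ν := condExpKernel μ m ω with hν
  have hmeas_eq : (inferInstance : MeasurableSpace ℝ)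
      = MeasurableSpace.generateFrom (⋃ a : ℚ, {Iic (a : ℝ)}) := by
    rw [BorelSpace.measurable_eq (α := ℝ), Real.borel_eq_generateFrom_Iic_rat]
  have hgen : ∀ (f : Ω → ℝ), MeasurableSpace.comap f (inferInstance : MeasurableSpace ℝ)
      = MeasurableSpace.generateFrom {s | ∃ t ∈ (⋃ a : ℚ, {Iic (a : ℝ)}), f ⁻¹' t = s} := by
    intro f
    conv_lhs => rw [hmeas_eq]
    rw [MeasurableSpace.comap_generateFrom]
    rfl
  have hpi : ∀ (f : Ω → ℝ), IsPiSystem {s | ∃ t ∈ (⋃ a : ℚ, {Iic (a : ℝ)}), f ⁻¹' t = s} :=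
    fun f => Real.isPiSystem_Iic_rat.comap f
  have hindepsets : IndepSets {s | ∃ t ∈ (⋃ a : ℚ, {Iic (a : ℝ)}), u ⁻¹' t = s}
      {s | ∃ t ∈ (⋃ a : ℚ, {Iic (a : ℝ)}), w ⁻¹' t = s} ν := by
    rw [IndepSets_iff]
    rintro t1 t2 ⟨s1, hs1, rfl⟩ ⟨s2, hs2, rfl⟩
    simp only [mem_iUnion, mem_singleton_iff] at hs1 hs2
    obtain ⟨q, rfl⟩ := hs1
    obtain ⟨r, rfl⟩ := hs2
    have hqr := hω (q, r)
    rw [← ENNReal.toReal_mul] at hqr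
    exact (ENNReal.toReal_eq_toReal_iff' (measure_ne_top _ _)
      (ENNReal.mul_ne_top (measure_ne_top _ _) (measure_ne_top _ _))).mp hqr
  have hIndep : Indep (MeasurableSpace.comap u inferInstance)
      (MeasurableSpace.comap w inferInstance) ν :=
    IndepSets.indep hu.comap_le hw.comap_le (hpi u) (hpi w) (hgen u) (hgen w) hindepsets
  exact hIndep

end Aux

lemma integral_inverse_weighted_aux
    {Ω : Type*} {m : MeasurableSpace Ω} [mΩ : MeasurableSpace Ω] [StandardBorelSpace Ω]
    {μ : Measure Ω} [IsProbabilityMeasure μ] {k : ℕ}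
    (X τ : Ω → Fin k → ℝ) (Y : Ω → ℝ)
    (Q : Ω → Matrix (Fin k) (Fin k) ℝ)
    (hX : Measurable X) (hτ : Measurable τ)
    (hm : m ≤ mΩ)
    (hindep : CondIndepFun m hm X τ μ)
    (hY : ∀ ω, Y ω = ∑ j, X ω j * τ ω j)
    (hQmeas : ∀ i j, Measurable[m] fun ω => Q ω i j)
    (hQ : ∀ i j, (fun ω => Q ω i j) =ᵐ[μ] μ[fun ω => X ω i * X ω j | m])
    (hQinv : ∀ᵐ ω ∂μ, IsUnit (Q ω).det)
    (hintXX : ∀ i j, Integrable (fun ω => X ω i * X ω j) μ)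
    (hintτ : Integrable τ μ)
    (hintW : Integrable (fun ω => (Q ω)⁻¹ *ᵥ (Y ω • X ω)) μ) :
    ∫ ω, (Q ω)⁻¹ *ᵥ (Y ω • X ω) ∂μ = ∫ ω, τ ω ∂μ := by
  set W : Ω → Fin k → ℝ := fun ω => (Q ω)⁻¹ *ᵥ (Y ω • X ω) with hW_def
  -- a.e. facts
  -- (1) Q constant under the kernel
  have hA : ∀ᵐ ω ∂μ, ∀ᵐ ω' ∂(condExpKernel μ m ω), ∀ p : Fin k × Fin k,
      Q ω' p.1 p.2 = Q ω p.1 p.2 := by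
    have h1 : ∀ p : Fin k × Fin k, ∀ᵐ ω ∂μ, ∀ᵐ ω' ∂(condExpKernel μ m ω),
        Q ω' p.1 p.2 = Q ω p.1 p.2 :=
      fun p => ae_ae_eq_condexpKernel hm (hQmeas p.1 p.2)
    rw [← ae_all_iff] at h1
    filter_upwards [h1] with ω hω
    rw [ae_all_iff]
    exact hω
  -- (2) value of Q
  have hB : ∀ᵐ ω ∂μ, ∀ p : Fin k × Fin k,
      Q ω p.1 p.2 = ∫ x, X x p.1 * X x p.2 ∂(condExpKernel μ m ω) := by
    rw [ae_all_iff]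
    intro p
    exact (hQ p.1 p.2).trans (condExp_ae_eq_integral_condExpKernel hm (hintXX p.1 p.2))
  -- (3) independence under the kernel
  have hC : ∀ᵐ ω ∂μ, ∀ p : Fin k × Fin k,
      IndepFun (fun x => X x p.1 * X x p.2) (fun x => τ x p.2) (condExpKernel μ m ω) := by
    rw [ae_all_iff]
    intro p
    have hφ : Measurable fun x : Fin k → ℝ => x p.1 * x p.2 :=
      (measurable_pi_apply p.1).mul (measurable_pi_apply p.2)
    have hψ : Measurable fun x : Fin k → ℝ => x p.2 := measurable_pi_apply p.2
    exact ae_indepFun_condexpKernel hm (hφ.comp hX) (hψ.comp hτ) (hindep.comp hφ hψ)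
  -- (4) integrabilities under the kernel
  have hD : ∀ᵐ ω ∂μ, Integrable W (condExpKernel μ m ω) := hintW.condExpKernel_ae
  have hE : ∀ᵐ ω ∂μ, ∀ p : Fin k × Fin k,
      Integrable (fun x => X x p.1 * X x p.2) (condExpKernel μ m ω) := by
    rw [ae_all_iff]; exact fun p => (hintXX p.1 p.2).condExpKernel_ae
  have hF : ∀ᵐ ω ∂μ, Integrable τ (condExpKernel μ m ω) := hintτ.condExpKernel_ae
  -- the key identity
  have key : (fun ω => ∫ x, W x ∂(condExpKernel μ m ω))
      =ᵐ[μ] fun ω => ∫ x, τ x ∂(condExpKernel μ m ω) := by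
    filter_upwards [hA, hB, hC, hD, hE, hF, hQinv] with ω hA hB hC hD hE hF hdet
    haveI : IsProbabilityMeasure (condExpKernel μ m ω) := by infer_instance
    set ν := condExpKernel μ m ω with hν
    set R : Matrix (Fin k) (Fin k) ℝ := (Q ω)⁻¹ with hR
    -- component integrability of τ
    have hτl : ∀ l, Integrable (fun x => τ x l) ν := fun l => by
      have := (ContinuousLinearMap.proj (R := ℝ) (φ := fun _ : Fin k => ℝ) l).integrable_comp hF
      simpa using this
    -- Q is a.s. constant equal to Q ω under ν
    have hQc : ∀ᵐ x ∂ν, Q x = Q ω := by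
      filter_upwards [hA] with x hx
      exact Matrix.ext fun i j => hx (i, j)
    -- pointwise form of W on the good set
    have hWrep : ∀ᵐ x ∂ν, ∀ i,
        W x i = ∑ j, ∑ l, R i j * (X x j * X x l * τ x l) := by
      filter_upwards [hQc] with x hx
      intro i
      have : W x i = ∑ j, R i j * (Y x * X x j) := by
        simp [hW_def, hx, hR, Matrix.mulVec, dotProduct, Pi.smul_apply, smul_eq_mul]
      rw [this]
      refine Finset.sum_congr rfl fun j _ => ?_
      rw [hY x, Finset.sum_mul, Finset.mul_sum]
      exact Finset.sum_congr rfl fun l _ => by ring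
    -- integrability of each term
    have hterm : ∀ i j l, Integrable (fun x => R i j * (X x j * X x l * τ x l)) ν := by
      intro i j l
      have hmul : Integrable ((fun x => X x j * X x l) * fun x => τ x l) ν :=
        (hC (j, l)).integrable_mul (hE (j, l)) (hτl l)
      have hmul' : Integrable (fun x => X x j * X x l * τ x l) ν := hmul
      exact hmul'.const_mul _
    -- now compute componentwise
    funext i
    have hLW : (∫ x, W x ∂ν) i = ∫ x, W x i ∂ν := by
      have := (ContinuousLinearMap.proj (R := ℝ) (φ := fun _ : Fin k => ℝ) i).integral_comp_comm hD
      simpa using this.symm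
    have hLτ : (∫ x, τ x ∂ν) i = ∫ x, τ x i ∂ν := by
      have := (ContinuousLinearMap.proj (R := ℝ) (φ := fun _ : Fin k => ℝ) i).integral_comp_comm hF
      simpa using this.symm
    rw [hLW, hLτ]
    have step1 : ∫ x, W x i ∂ν
        = ∫ x, ∑ j, ∑ l, R i j * (X x j * X x l * τ x l) ∂ν := by
      refine integral_congr_ae ?_
      filter_upwards [hWrep] with x hx using hx i
    rw [step1, integral_finset_sum _ (fun j _ => integrable_finset_sum _ fun l _ => hterm i j l)]
    have step2 : ∀ j, ∫ x, ∑ l, R i j * (X x j * X x l * τ x l) ∂ν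
        = ∑ l, R i j * (Q ω j l * ∫ x, τ x l ∂ν) := by
      intro j
      rw [integral_finset_sum _ (fun l _ => hterm i j l)]
      refine Finset.sum_congr rfl fun l _ => ?_
      rw [integral_const_mul]
      congr 1
      have hmulint : ∫ x, (fun x => X x j * X x l) x * (fun x => τ x l) x ∂ν
          = (∫ x, X x j * X x l ∂ν) * ∫ x, τ x l ∂ν := by
        have := (hC (j, l)).integral_mul_eq_mul_integral (hE (j, l)).aestronglyMeasurable
          (hτl l).aestronglyMeasurable
        simpa [Pi.mul_apply] using this
      simpa [hB (j, l)] using hmulint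
    rw [Finset.sum_congr rfl fun j _ => step2 j]
    -- algebra: ∑ j ∑ l R i j * (Q ω j l * T l) = T i
    rw [Finset.sum_comm]
    have hRQ : R * Q ω = 1 := Matrix.nonsing_inv_mul (Q ω) hdet
    calc ∑ l, ∑ j, R i j * (Q ω j l * ∫ x, τ x l ∂ν)
        = ∑ l, (R * Q ω) i l * ∫ x, τ x l ∂ν := by
          refine Finset.sum_congr rfl fun l _ => ?_
          rw [Matrix.mul_apply, Finset.sum_mul]
          exact Finset.sum_congr rfl fun j _ => by ring
      _ = ∫ x, τ x i ∂ν := by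
          rw [hRQ]
          simp [Matrix.one_apply]
  -- conclude
  have hcond : μ[W|m] =ᵐ[μ] μ[τ|m] :=
    ((condExp_ae_eq_integral_condExpKernel hm hintW).trans key).trans
      (condExp_ae_eq_integral_condExpKernel hm hintτ).symm
  calc ∫ ω, W ω ∂μ = ∫ ω, (μ[W|m]) ω ∂μ := (integral_condExp hm).symm
    _ = ∫ ω, (μ[τ|m]) ω ∂μ := integral_congr_ae hcond
    _ = ∫ ω, τ ω ∂μ := integral_condExp hm


/-- If `Y = X'τ`, `X ⊥ τ | V`, and `Q(V) = E[XX' | V]` is invertible a.s.,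
then the inverse-weighted moment identifies the mean random coefficient:
`E[Q(V)⁻¹ X Y] = E[τ]`. -/
theorem integral_inverse_weighted_eq_integral_coeff
    {Ω 𝒱 : Type*} [mΩ : MeasurableSpace Ω] [StandardBorelSpace Ω] [MeasurableSpace 𝒱]
    {μ : Measure Ω} [IsProbabilityMeasure μ] {k : ℕ}
    (X τ : Ω → Fin k → ℝ) (V : Ω → 𝒱) (Y : Ω → ℝ)
    (Q : Ω → Matrix (Fin k) (Fin k) ℝ)
    (hX : Measurable X) (hτ : Measurable τ) (hV : Measurable V)
    (hle : MeasurableSpace.comap V inferInstance ≤ mΩ)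
    (hindep : CondIndepFun (MeasurableSpace.comap V inferInstance) hle X τ μ)
    (hY : ∀ ω, Y ω = ∑ j, X ω j * τ ω j)
    -- `Q` is a function of `V` (measurable w.r.t. σ(V)) ...
    (hQmeas : ∀ i j, Measurable[MeasurableSpace.comap V inferInstance] fun ω => Q ω i j)
    -- ... and is a version of the conditional second moment matrix `E[XX' | V]`:
    (hQ : ∀ i j, (fun ω => Q ω i j) =ᵐ[μ]
      μ[fun ω => X ω i * X ω j | MeasurableSpace.comap V inferInstance])
    -- `Q(V)` is invertible almost surely:
    (hQinv : ∀ᵐ ω ∂μ, IsUnit (Q ω).det)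
    (hintXX : ∀ i j, Integrable (fun ω => X ω i * X ω j) μ)
    (hintτ : Integrable τ μ)
    (hintW : Integrable (fun ω => (Q ω)⁻¹ *ᵥ (Y ω • X ω)) μ) :
    ∫ ω, (Q ω)⁻¹ *ᵥ (Y ω • X ω) ∂μ = ∫ ω, τ ω ∂μ :=
  integral_inverse_weighted_aux X τ Y Q hX hτ hle hindep hY hQmeas hQ hQinv hintXX hintτ hintW
end

section
/- Let (D, T) be random variables and P = (p_d, p_f, L) a measurable function of a random vector C such that, conditional on C, D is Bernoulli(p_d), T is Binomial(L, p_f), and D ⊥ T | C. Then (D, T) ⊥ C | P. That is, P is a balancing score. -/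
open MeasureTheory ProbabilityTheory
open scoped ProbabilityTheory

noncomputable def bernPMF' (d : ℕ) (p : ℝ) : ℝ :=
  if d = 0 then 1 - p else if d = 1 then p else 0

noncomputable def binomPMF' (l k : ℕ) (q : ℝ) : ℝ :=
  (l.choose k : ℝ) * q ^ k * (1 - q) ^ (l - k)

lemma bernPMF'_measurable (d : ℕ) : Measurable (bernPMF' d) := by
  unfold bernPMF'; split_ifs
  · exact measurable_const.sub measurable_id
  · exact measurable_id
  · exact measurable_const

lemma binomPMF'_measurable (k : ℕ) :
    Measurable (fun x : ℝ × ℝ × ℕ => binomPMF' x.2.2 k x.2.1) := by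
  unfold binomPMF'
  have h22 : Measurable (fun x : ℝ × ℝ × ℕ => x.2.2) := measurable_snd.comp measurable_snd
  have h21 : Measurable (fun x : ℝ × ℝ × ℕ => x.2.1) := measurable_fst.comp measurable_snd
  refine Measurable.mul (Measurable.mul ?_ ?_) ?_
  · exact (measurable_from_top (f := fun n : ℕ => ((n.choose k : ℕ) : ℝ))).comp h22
  · exact (h21).pow_const k
  · exact (measurable_const.sub h21).pow ((measurable_from_top (f := fun n : ℕ => n - k)).comp h22)

lemma bernPMF'_mem (d : ℕ) {p : ℝ} (hp : p ∈ Set.Icc (0:ℝ) 1) :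
    bernPMF' d p ∈ Set.Icc (0:ℝ) 1 := by
  unfold bernPMF'; obtain ⟨h0, h1⟩ := hp
  split_ifs <;> constructor <;> linarith

lemma binomPMF'_mem (l k : ℕ) {q : ℝ} (hq : q ∈ Set.Icc (0:ℝ) 1) :
    binomPMF' l k q ∈ Set.Icc (0:ℝ) 1 := by
  obtain ⟨h0, h1⟩ := hq
  have h1' : 0 ≤ 1 - q := by linarith
  have hnn : ∀ j, 0 ≤ binomPMF' l j q := by
    intro j; unfold binomPMF'; positivity
  refine ⟨hnn k, ?_⟩
  by_cases hk : k ≤ l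
  · have hsum : ∑ j ∈ Finset.range (l + 1), binomPMF' l j q = 1 := by
      have h := add_pow q (1 - q) l
      simp only [add_sub_cancel, one_pow] at h
      rw [show (1:ℝ) = ∑ m ∈ Finset.range (l + 1), q ^ m * (1 - q) ^ (l - m) * (l.choose m : ℝ)
        from h]
      exact Finset.sum_congr rfl fun j _ => by unfold binomPMF'; ring
    calc binomPMF' l k q ≤ ∑ j ∈ Finset.range (l + 1), binomPMF' l j q :=
          Finset.single_le_sum (fun j _ => hnn j) (Finset.mem_range.mpr (Nat.lt_succ_of_le hk))
      _ = 1 := hsum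
  · unfold binomPMF'
    rw [Nat.choose_eq_zero_of_lt (lt_of_not_ge hk)]
    norm_num

/-- **Balancing.** Suppose that, conditionally on covariates `C`,
`D` is `Bernoulli(p_d(C))`, `T` is `Binomial(L(C), p_f(C))`, and `D ⊥ T | C`.
Then the network propensity score `P = (p_d(C), p_f(C), L(C))` is a balancing score:
`(D, T) ⊥ C | P`. -/
theorem network_propensity_score_balancing
    {Ω γ : Type*} [mΩ : MeasurableSpace Ω] [StandardBorelSpace Ω] [MeasurableSpace γ]
    {μ : Measure Ω} [IsProbabilityMeasure μ]
    (C : Ω → γ) (D T : Ω → ℕ)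
    (p_d p_f : γ → ℝ) (L : γ → ℕ)
    (hC : Measurable C) (hD : Measurable D) (hT : Measurable T)
    (hpd : Measurable p_d) (hpf : Measurable p_f) (hLm : Measurable L)
    (hD01 : ∀ ω, D ω ≤ 1)
    (hpd01 : ∀ c, p_d c ∈ Set.Icc (0:ℝ) 1) (hpf01 : ∀ c, p_f c ∈ Set.Icc (0:ℝ) 1)
    (hleC : MeasurableSpace.comap C inferInstance ≤ mΩ)
    (hleP : MeasurableSpace.comap (fun ω => (p_d (C ω), p_f (C ω), L (C ω)))
      inferInstance ≤ mΩ)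
    -- `D | C ~ Bernoulli(p_d(C))`:
    (hDdist : μ⟦{ω | D ω = 1} | MeasurableSpace.comap C inferInstance⟧ =ᵐ[μ]
      fun ω => p_d (C ω))
    -- `T | C ~ Binomial(L(C), p_f(C))`:
    (hTdist : ∀ k : ℕ, μ⟦{ω | T ω = k} | MeasurableSpace.comap C inferInstance⟧ =ᵐ[μ]
      fun ω => ((L (C ω)).choose k : ℝ) * p_f (C ω) ^ k *
        (1 - p_f (C ω)) ^ (L (C ω) - k))
    -- `D ⊥ T | C`:
    (hDT : CondIndepFun (MeasurableSpace.comap C inferInstance) hleC D T μ) :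
    CondIndepFun (MeasurableSpace.comap (fun ω => (p_d (C ω), p_f (C ω), L (C ω)))
      inferInstance) hleP (fun ω => (D ω, T ω)) C μ := by
  set X : Ω → ℕ × ℕ := fun ω => (D ω, T ω) with hX
  set P' : Ω → ℝ × ℝ × ℕ := fun ω => (p_d (C ω), p_f (C ω), L (C ω)) with hP'
  have hXm : Measurable X := hD.prodMk hT
  have hφ : Measurable (fun c => (p_d c, p_f c, L c)) := hpd.prodMk (hpf.prodMk hLm)
  have hD1meas : MeasurableSet {ω | D ω = 1} := hD (measurableSet_singleton 1)
  have hPC : MeasurableSpace.comap P' inferInstance ≤ MeasurableSpace.comap C inferInstance := by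
    rw [show P' = (fun c => (p_d c, p_f c, L c)) ∘ C from rfl,
      ← MeasurableSpace.comap_comp]
    exact MeasurableSpace.comap_mono hφ.comap_le
  -- conditional law of D given C
  have hDd : ∀ d : ℕ, μ⟦D ⁻¹' {d} | (MeasurableSpace.comap C inferInstance : MeasurableSpace Ω)⟧ =ᵐ[μ] fun ω => bernPMF' d (p_d (C ω)) := by
    intro d
    have hset1 : D ⁻¹' {1} = {ω | D ω = 1} := by ext ω; simp
    match d with
    | 1 =>
      rw [hset1]
      refine hDdist.trans ?_
      refine Filter.EventuallyEq.of_eq ?_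
      funext ω; simp [bernPMF']
    | 0 =>
      have hset : Set.indicator (D ⁻¹' {0}) (fun _ => (1:ℝ)) =
          (fun _ => (1:ℝ)) - Set.indicator {ω | D ω = 1} (fun _ => (1:ℝ)) := by
        funext ω
        have := hD01 ω
        by_cases h : D ω = 1 <;>
          simp [Set.indicator, h, show (D ω = 0 ↔ ¬ D ω = 1) by omega]
      have hint : Integrable (Set.indicator {ω | D ω = 1} (fun _ => (1:ℝ))) μ := by
        exact (integrable_const 1).indicator hD1meas
      calc μ⟦D ⁻¹' {0} | (MeasurableSpace.comap C inferInstance : MeasurableSpace Ω)⟧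
          = μ[(fun _ => (1:ℝ)) - Set.indicator {ω | D ω = 1} (fun _ => (1:ℝ)) | (MeasurableSpace.comap C inferInstance : MeasurableSpace Ω)] := by
            rw [hset]
        _ =ᵐ[μ] μ[(fun _ => (1:ℝ)) | (MeasurableSpace.comap C inferInstance : MeasurableSpace Ω)] - μ⟦{ω | D ω = 1} | (MeasurableSpace.comap C inferInstance : MeasurableSpace Ω)⟧ :=
            condExp_sub (integrable_const 1) hint _
        _ =ᵐ[μ] fun ω => bernPMF' 0 (p_d (C ω)) := by
            have h1 : μ[(fun _ => (1:ℝ)) | (MeasurableSpace.comap C inferInstance : MeasurableSpace Ω)] = fun _ => (1:ℝ) := condExp_const hleC 1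
            filter_upwards [hDdist] with ω hω
            simp only [Pi.sub_apply, h1, hω, bernPMF']
            norm_num
    | (n+2) =>
      have hset : D ⁻¹' {n+2} = (∅ : Set Ω) := by
        ext ω; simp; have := hD01 ω; omega
      rw [hset]
      have hz : Set.indicator (∅ : Set Ω) (fun _ => (1:ℝ)) = (0 : Ω → ℝ) := by
        funext ω; simp
      rw [hz, condExp_zero]
      refine Filter.EventuallyEq.of_eq ?_
      funext ω; simp [bernPMF']
  -- conditional law of T given C
  have hTk : ∀ k : ℕ, μ⟦T ⁻¹' {k} | (MeasurableSpace.comap C inferInstance : MeasurableSpace Ω)⟧ =ᵐ[μ] fun ω => binomPMF' (L (C ω)) k (p_f (C ω)) := by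
    intro k
    have hset : T ⁻¹' {k} = {ω | T ω = k} := by ext ω; simp
    rw [hset]
    exact (hTdist k).trans (Filter.EventuallyEq.of_eq (by funext ω; simp [binomPMF']))
  -- conditional law of (D, T) given C
  have hA_C : ∀ d k : ℕ, μ⟦X ⁻¹' {(d, k)} | (MeasurableSpace.comap C inferInstance : MeasurableSpace Ω)⟧ =ᵐ[μ]
      fun ω => bernPMF' d (p_d (C ω)) * binomPMF' (L (C ω)) k (p_f (C ω)) := by
    intro d k
    have hset : X ⁻¹' {(d, k)} = D ⁻¹' {d} ∩ T ⁻¹' {k} := by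
      ext ω; simp [hX, Prod.ext_iff]
    have hprod := (condIndepFun_iff_condExp_inter_preimage_eq_mul hD hT).mp hDT
      {d} {k} (measurableSet_singleton d) (measurableSet_singleton k)
    rw [hset]
    exact hprod.trans (Filter.EventuallyEq.mul (hDd d) (hTk k))
  -- the key product formula at the level of (MeasurableSpace.comap P' inferInstance : MeasurableSpace Ω)
  have key : ∀ (d k : ℕ) (B : Set Ω), MeasurableSet[(MeasurableSpace.comap C inferInstance : MeasurableSpace Ω)] B →
      μ⟦X ⁻¹' {(d, k)} ∩ B | (MeasurableSpace.comap P' inferInstance : MeasurableSpace Ω)⟧ =ᵐ[μ] μ⟦X ⁻¹' {(d, k)} | (MeasurableSpace.comap P' inferInstance : MeasurableSpace Ω)⟧ * μ⟦B | (MeasurableSpace.comap P' inferInstance : MeasurableSpace Ω)⟧ := by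
    intro d k B hB
    set A : Set Ω := X ⁻¹' {(d, k)} with hA
    have hAmeas : MeasurableSet[mΩ] A := hXm (measurableSet_singleton _)
    set g : Ω → ℝ := fun ω => bernPMF' d (p_d (C ω)) * binomPMF' (L (C ω)) k (p_f (C ω))
      with hg
    have hG : Measurable (fun x : ℝ × ℝ × ℕ => bernPMF' d x.1 * binomPMF' x.2.2 k x.2.1) :=
      ((bernPMF'_measurable d).comp measurable_fst).mul (binomPMF'_measurable k)
    have hP'm : Measurable[MeasurableSpace.comap P' inferInstance] P' :=
      measurable_iff_comap_le.mpr le_rfl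
    have hg_meas : StronglyMeasurable[(MeasurableSpace.comap P' inferInstance : MeasurableSpace Ω)] g := by
      have : Measurable[(MeasurableSpace.comap P' inferInstance : MeasurableSpace Ω)] g := hG.comp hP'm
      exact this.stronglyMeasurable
    have hg_bound : ∀ ω, ‖g ω‖ ≤ 1 := by
      intro ω
      have h1 := bernPMF'_mem d (hpd01 (C ω))
      have h2 := binomPMF'_mem (L (C ω)) k (hpf01 (C ω))
      rw [Real.norm_eq_abs, abs_of_nonneg (mul_nonneg h1.1 h2.1)]
      exact mul_le_one₀ h1.2 h2.1 h2.2
    have hg_int : Integrable g μ :=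
      (integrable_const 1).mono' (hg_meas.mono hleP).aestronglyMeasurable
        (Filter.Eventually.of_forall hg_bound)
    have hAint : Integrable (Set.indicator A (fun _ => (1:ℝ))) μ :=
      (integrable_const 1).indicator hAmeas
    have hBint : Integrable (Set.indicator B (fun _ => (1:ℝ))) μ :=
      (integrable_const 1).indicator (hleC _ hB)
    have hA_P : μ⟦A | (MeasurableSpace.comap P' inferInstance : MeasurableSpace Ω)⟧ =ᵐ[μ] g := by
      calc μ⟦A | (MeasurableSpace.comap P' inferInstance : MeasurableSpace Ω)⟧
          =ᵐ[μ] μ[μ⟦A | (MeasurableSpace.comap C inferInstance : MeasurableSpace Ω)⟧ | (MeasurableSpace.comap P' inferInstance : MeasurableSpace Ω)] := (condExp_condExp_of_le hPC hleC).symm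
        _ =ᵐ[μ] μ[g | (MeasurableSpace.comap P' inferInstance : MeasurableSpace Ω)] := condExp_congr_ae (hA_C d k)
        _ =ᵐ[μ] g := by rw [condExp_of_stronglyMeasurable hleP hg_meas hg_int]
    have hAB_C : μ⟦A ∩ B | (MeasurableSpace.comap C inferInstance : MeasurableSpace Ω)⟧ =ᵐ[μ] B.indicator g := by
      have hi : Set.indicator (A ∩ B) (fun _ => (1:ℝ)) =
          Set.indicator B (Set.indicator A (fun _ => (1:ℝ))) := by
        rw [Set.indicator_indicator, Set.inter_comm]
      calc μ⟦A ∩ B | (MeasurableSpace.comap C inferInstance : MeasurableSpace Ω)⟧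
          = μ[Set.indicator B (Set.indicator A (fun _ => (1:ℝ))) | (MeasurableSpace.comap C inferInstance : MeasurableSpace Ω)] := by rw [hi]
        _ =ᵐ[μ] B.indicator (μ⟦A | (MeasurableSpace.comap C inferInstance : MeasurableSpace Ω)⟧) := condExp_indicator hAint hB
        _ =ᵐ[μ] B.indicator g := by
            filter_upwards [hA_C d k] with ω hω
            by_cases h : ω ∈ B <;> simp [Set.indicator_apply, h, hω, hA, hg]
    calc μ⟦A ∩ B | (MeasurableSpace.comap P' inferInstance : MeasurableSpace Ω)⟧
        =ᵐ[μ] μ[μ⟦A ∩ B | (MeasurableSpace.comap C inferInstance : MeasurableSpace Ω)⟧ | (MeasurableSpace.comap P' inferInstance : MeasurableSpace Ω)] := (condExp_condExp_of_le hPC hleC).symm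
      _ =ᵐ[μ] μ[B.indicator g | (MeasurableSpace.comap P' inferInstance : MeasurableSpace Ω)] := condExp_congr_ae hAB_C
      _ = μ[g * Set.indicator B (fun _ => (1:ℝ)) | (MeasurableSpace.comap P' inferInstance : MeasurableSpace Ω)] := by
          have hfe : B.indicator g = g * Set.indicator B (fun _ => (1:ℝ)) := by
            funext ω; by_cases h : ω ∈ B <;> simp [Set.indicator_apply, h]
          rw [hfe]
      _ =ᵐ[μ] g * μ⟦B | (MeasurableSpace.comap P' inferInstance : MeasurableSpace Ω)⟧ :=
          condExp_stronglyMeasurable_mul_of_bound hleP hg_meas hBint 1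
            (Filter.Eventually.of_forall hg_bound)
      _ =ᵐ[μ] μ⟦A | (MeasurableSpace.comap P' inferInstance : MeasurableSpace Ω)⟧ * μ⟦B | (MeasurableSpace.comap P' inferInstance : MeasurableSpace Ω)⟧ := Filter.EventuallyEq.mul hA_P.symm
          Filter.EventuallyEq.rfl
  -- π-systems
  set p1 : Set (Set Ω) := {s | ∃ x : ℕ × ℕ, X ⁻¹' {x} = s} with hp1def
  set p2 : Set (Set Ω) := {s | MeasurableSet[(MeasurableSpace.comap C inferInstance : MeasurableSpace Ω)] s} with hp2def
  have hp1 : IsPiSystem p1 := by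
    rintro s ⟨x, rfl⟩ t ⟨y, rfl⟩ hst
    obtain ⟨ω, hωs, hωt⟩ := hst
    simp only [Set.mem_preimage, Set.mem_singleton_iff] at hωs hωt
    have : x = y := by rw [← hωs, ← hωt]
    subst this
    exact ⟨x, by simp⟩
  have hp2 : IsPiSystem p2 := by
    rintro s hs t ht _
    simp only [hp2def, Set.mem_setOf_eq] at hs ht ⊢
    exact MeasurableSet.inter hs ht
  have hpm1 : MeasurableSpace.comap X inferInstance = MeasurableSpace.generateFrom p1 := by
    apply le_antisymm
    · rintro s ⟨u, hu, rfl⟩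
      have : X ⁻¹' u = ⋃ x ∈ u, X ⁻¹' {x} := by ext ω; simp
      rw [this]
      exact MeasurableSet.biUnion u.to_countable
        (fun x _ => MeasurableSpace.measurableSet_generateFrom ⟨x, rfl⟩)
    · refine MeasurableSpace.generateFrom_le ?_
      rintro s ⟨x, rfl⟩
      exact ⟨{x}, measurableSet_singleton x, rfl⟩
  have hpm2 : (MeasurableSpace.comap C inferInstance : MeasurableSpace Ω) = MeasurableSpace.generateFrom p2 :=
    (@MeasurableSpace.generateFrom_measurableSet Ω (MeasurableSpace.comap C inferInstance)).symm
  have hsets : CondIndepSets (MeasurableSpace.comap P' inferInstance : MeasurableSpace Ω) hleP p1 p2 μ := by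
    refine (condIndepSets_iff (MeasurableSpace.comap P' inferInstance) hleP p1 p2 ?_ ?_ μ).mpr ?_
    · rintro s ⟨x, rfl⟩; exact hXm (measurableSet_singleton x)
    · exact fun s hs => hleC s hs
    · rintro t1 t2 ⟨⟨d, k⟩, rfl⟩ ht2
      exact key d k t2 ht2
  have hCI : CondIndep (MeasurableSpace.comap P' inferInstance : MeasurableSpace Ω) (MeasurableSpace.comap X inferInstance)
      (MeasurableSpace.comap C inferInstance) hleP μ := by
    refine CondIndepSets.condIndep hXm.comap_le hleC hp1 hp2 hpm1 ?_ hsets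
    exact hpm2
  exact (condIndepFun_iff_condIndep (MeasurableSpace.comap P' inferInstance) hleP X C μ).mpr hCI
end

section
/- (Balancing plus selection-on-observables implies unconfoundedness given the score) Suppose X ⊥ C | P where P is a measurable function of C, and suppose X ⊥ τ | C. Then X ⊥ τ | P. -/
open MeasureTheory ProbabilityTheory

/-- Conditional expectations of indicators are a.e. bounded by 1. -/
lemma aux_condexp_indicator_abs_le_one {Ω : Type*} {m : MeasurableSpace Ω}
    {mΩ : MeasurableSpace Ω} {μ : Measure Ω} (S : Set Ω) :
    ∀ᵐ ω ∂μ, |(μ⟦S | m⟧) ω| ≤ ((1 : NNReal) : ℝ) := by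
  refine ae_bdd_condExp_of_ae_bdd (Filter.Eventually.of_forall fun ω => ?_)
  by_cases h : ω ∈ S <;> simp [Set.indicator, h]

/-- If `X ⊥ C | mP` with `mP ≤ σ(C)`, then `E[1_{X ∈ s} | σ(C)] = E[1_{X ∈ s} | mP]` a.e. -/
lemma aux_condexp_indicator_eq_of_condIndepFun {Ω β γ : Type*}
    [MeasurableSpace β] [MeasurableSpace γ]
    {mP mC : MeasurableSpace Ω} {mΩ : MeasurableSpace Ω} [StandardBorelSpace Ω]
    {μ : Measure Ω} [IsProbabilityMeasure μ]
    (X : Ω → β) (C : Ω → γ) (hX : Measurable X) (hC : Measurable C)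
    (hmC : mC = MeasurableSpace.comap C inferInstance)
    (hPC : mP ≤ mC) (hleC : mC ≤ mΩ) (hleP : mP ≤ mΩ)
    (hbal : CondIndepFun mP hleP X C μ)
    {s : Set β} (hs : MeasurableSet s) :
    (μ⟦X ⁻¹' s | mP⟧) =ᵐ[μ] (μ⟦X ⁻¹' s | mC⟧) := by
  rw [condIndepFun_iff_condExp_inter_preimage_eq_mul hX hC] at hbal
  set A : Set Ω := X ⁻¹' s with hA_def
  have hA : MeasurableSet[mΩ] A := hX hs
  have hiA_int : Integrable (A.indicator fun _ => (1 : ℝ)) μ :=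
    (integrable_const (1 : ℝ)).indicator hA
  refine ae_eq_condExp_of_forall_setIntegral_eq hleC hiA_int
    (fun S _ _ => integrable_condExp.integrableOn) (fun S hS _ => ?_)
    (StronglyMeasurable.aestronglyMeasurable (stronglyMeasurable_condExp.mono hPC))
  -- `S` is of the form `C ⁻¹' u`
  rw [hmC] at hS
  obtain ⟨u, hu, rfl⟩ := hS
  set S : Set Ω := C ⁻¹' u with hS_def
  have hSmeas : MeasurableSet[mΩ] S := hC hu
  set iS : Ω → ℝ := S.indicator (fun _ => (1 : ℝ)) with hiS
  have hiS_int : Integrable iS μ := (integrable_const (1 : ℝ)).indicator hSmeas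
  have hg_meas : StronglyMeasurable[mP] (μ⟦A | mP⟧) := stronglyMeasurable_condExp
  have hg_bdd := aux_condexp_indicator_abs_le_one (m := mP) (μ := μ) A
  have e1 : ∫ ω in S, (μ⟦A | mP⟧) ω ∂μ = ∫ ω, (μ⟦A | mP⟧) ω * iS ω ∂μ := by
    rw [← integral_indicator hSmeas]
    refine integral_congr_ae (Filter.Eventually.of_forall fun ω => ?_)
    by_cases h : ω ∈ S <;> simp [hiS, Set.indicator, h]
  have hprod_int : Integrable (fun ω => (μ⟦A | mP⟧) ω * iS ω) μ :=
    hiS_int.bdd_mul (c := 1)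
      (stronglyMeasurable_condExp.mono hleP).aestronglyMeasurable
      (by filter_upwards [hg_bdd] with ω h using by simpa using h)
  have e2 : μ[(fun ω => (μ⟦A | mP⟧) ω * iS ω) | mP]
      =ᵐ[μ] (μ⟦A | mP⟧) * (μ⟦S | mP⟧) :=
    condExp_mul_of_stronglyMeasurable_left hg_meas hprod_int hiS_int
  have e3 : ∫ ω, (μ⟦A | mP⟧) ω * iS ω ∂μ
      = ∫ ω, ((μ⟦A | mP⟧) ω * (μ⟦S | mP⟧) ω) ∂μ := by
    rw [← integral_condExp hleP (f := fun ω => (μ⟦A | mP⟧) ω * iS ω)]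
    exact integral_congr_ae e2
  have e4 : ∫ ω, ((μ⟦A | mP⟧) ω * (μ⟦S | mP⟧) ω) ∂μ = ∫ ω, (μ⟦A ∩ S | mP⟧) ω ∂μ :=
    (integral_congr_ae (hbal s u hs hu)).symm
  have e5 : ∫ ω, (μ⟦A ∩ S | mP⟧) ω ∂μ = (μ (A ∩ S)).toReal := by
    rw [integral_condExp hleP, integral_indicator_const _ (hA.inter hSmeas)]
    simp
    rfl
  have e6 : ∫ ω in S, A.indicator (fun _ => (1 : ℝ)) ω ∂μ = (μ (A ∩ S)).toReal := by
    rw [setIntegral_indicator hA, setIntegral_const, Set.inter_comm]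
    simp
    rfl
  rw [e1, e3, e4, e5, e6]

/-- If `P = f(C)` is a balancing score (`X ⊥ C | P`) and selection on
observables holds (`X ⊥ τ | C`), then unconfoundedness holds given the score:
`X ⊥ τ | P`. -/
theorem unconfoundedness_given_balancing_score
    {Ω β γt γc δ : Type*} [mΩ : MeasurableSpace Ω] [StandardBorelSpace Ω]
    [MeasurableSpace β] [MeasurableSpace γt] [MeasurableSpace γc] [MeasurableSpace δ]
    {μ : Measure Ω} [IsProbabilityMeasure μ]
    (X : Ω → β) (τ : Ω → γt) (C : Ω → γc) (f : γc → δ)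
    (hX : Measurable X) (hτ : Measurable τ) (hC : Measurable C) (hf : Measurable f)
    (hleC : MeasurableSpace.comap C inferInstance ≤ mΩ)
    (hleP : MeasurableSpace.comap (fun ω => f (C ω)) inferInstance ≤ mΩ)
    (hbal : CondIndepFun (MeasurableSpace.comap (fun ω => f (C ω)) inferInstance) hleP X C μ)
    (hsel : CondIndepFun (MeasurableSpace.comap C inferInstance) hleC X τ μ) :
    CondIndepFun (MeasurableSpace.comap (fun ω => f (C ω)) inferInstance) hleP X τ μ := by
  have hPC : MeasurableSpace.comap (fun ω => f (C ω)) inferInstance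
      ≤ MeasurableSpace.comap C inferInstance := by
    have : (fun ω => f (C ω)) = f ∘ C := rfl
    rw [this, ← MeasurableSpace.comap_comp]
    exact MeasurableSpace.comap_mono hf.comap_le
  rw [condIndepFun_iff_condExp_inter_preimage_eq_mul hX hτ]
  rw [condIndepFun_iff_condExp_inter_preimage_eq_mul hX hτ] at hsel
  intro s t hs ht
  have hA : MeasurableSet[mΩ] (X ⁻¹' s) := hX hs
  have hB : MeasurableSet[mΩ] (τ ⁻¹' t) := hτ ht
  have key : (μ⟦X ⁻¹' s | MeasurableSpace.comap (fun ω => f (C ω)) inferInstance⟧)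
      =ᵐ[μ] (μ⟦X ⁻¹' s | MeasurableSpace.comap C inferInstance⟧) :=
    aux_condexp_indicator_eq_of_condIndepFun X C hX hC rfl hPC hleC hleP hbal hs
  have hgA_bdd := aux_condexp_indicator_abs_le_one
    (m := MeasurableSpace.comap (fun ω => f (C ω)) inferInstance) (μ := μ) (X ⁻¹' s)
  have hgB_int : Integrable (μ⟦τ ⁻¹' t | MeasurableSpace.comap C inferInstance⟧) μ :=
    integrable_condExp
  have hprod_int : Integrable (fun ω =>
      (μ⟦X ⁻¹' s | MeasurableSpace.comap (fun ω => f (C ω)) inferInstance⟧) ω *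
      (μ⟦τ ⁻¹' t | MeasurableSpace.comap C inferInstance⟧) ω) μ :=
    hgB_int.bdd_mul (c := 1)
      (stronglyMeasurable_condExp.mono hleP).aestronglyMeasurable
      (by filter_upwards [hgA_bdd] with ω h using by simpa using h)
  calc (μ⟦X ⁻¹' s ∩ τ ⁻¹' t | MeasurableSpace.comap (fun ω => f (C ω)) inferInstance⟧)
      =ᵐ[μ] μ[(μ⟦X ⁻¹' s ∩ τ ⁻¹' t | MeasurableSpace.comap C inferInstance⟧) |
          MeasurableSpace.comap (fun ω => f (C ω)) inferInstance] :=
        (condExp_condExp_of_le hPC hleC).symm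
    _ =ᵐ[μ] μ[(fun ω =>
          (μ⟦X ⁻¹' s | MeasurableSpace.comap (fun ω => f (C ω)) inferInstance⟧) ω *
          (μ⟦τ ⁻¹' t | MeasurableSpace.comap C inferInstance⟧) ω) |
          MeasurableSpace.comap (fun ω => f (C ω)) inferInstance] := by
        refine condExp_congr_ae ?_
        filter_upwards [hsel s t hs ht, key] with ω h1 h2
        rw [h1, h2]
    _ =ᵐ[μ] (μ⟦X ⁻¹' s | MeasurableSpace.comap (fun ω => f (C ω)) inferInstance⟧) *
          μ[(μ⟦τ ⁻¹' t | MeasurableSpace.comap C inferInstance⟧) |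
          MeasurableSpace.comap (fun ω => f (C ω)) inferInstance] :=
        condExp_mul_of_stronglyMeasurable_left stronglyMeasurable_condExp hprod_int hgB_int
    _ =ᵐ[μ] fun ω =>
          (μ⟦X ⁻¹' s | MeasurableSpace.comap (fun ω => f (C ω)) inferInstance⟧) ω *
          (μ⟦τ ⁻¹' t | MeasurableSpace.comap (fun ω => f (C ω)) inferInstance⟧) ω := by
        filter_upwards [condExp_condExp_of_le hPC hleC
          (f := (τ ⁻¹' t).indicator fun _ => (1 : ℝ))] with ω h
        simp only [Pi.mul_apply]
        rw [h]
end
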